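/- Let G be a connected finite simple graph on n vertices. In every graphic parity network for G, the number of gates whose outcome is not binary (i.e., whose outcome does not have exactly two elements) is at least n − 1. -/

import Mathlib

/-- Apply a CNOT gate `g = (control, target)` to a state `t : V → Finset V`:
the target wire receives the symmetric difference of the control and target terms,
all other wires are unchanged. -/
def applyGate {V : Type*} [DecidableEq V] (g : V × V) (t : V → Finset V) : V → Finset V :=
  fun w => if w = g.2 then symmDiff (t g.1) (t g.2) else t w

/-- Run a circuit (a list of CNOT gates) from the initial state `term v = {v}`. -/
def runCircuit {V : Type*} [DecidableEq V] (C : List (V × V)) : V → Finset V :=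
  C.foldl (fun t g => applyGate g t) (fun v => {v})

/-- `C` is a graphic parity network for the graph `G`:
every gate has distinct control and target, every edge `{u, v}` of `G` appears as the
term of some wire after some prefix of the circuit, and the final state is the initial
state. Its size is `C.length`. -/
def IsGPN {V : Type*} [DecidableEq V] (G : SimpleGraph V) (C : List (V × V)) : Prop :=
  (∀ g ∈ C, g.1 ≠ g.2) ∧
  (∀ u v : V, G.Adj u v → ∃ (k : ℕ) (w : V), runCircuit (C.take k) w = {u, v}) ∧
  (∀ v : V, runCircuit C v = {v})

set_option linter.unusedSectionVars false

namespace Stmt6Proof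

open Finset

variable {V : Type*} [Fintype V] [DecidableEq V]

/-- The set of colors (w.r.t. coloring `c`) whose fiber meets `r` in an odd set. -/
def obs (c : V → V) (r : Finset V) : Finset V :=
  Finset.univ.filter fun b => ¬ Even ((r.filter fun x => c x = b).card)

lemma mem_obs {c : V → V} {r : Finset V} {b : V} :
    b ∈ obs c r ↔ ¬ Even ((r.filter fun x => c x = b).card) := by
  simp [obs]

lemma card_symmDiff_aux (X Y : Finset V) :
    (symmDiff X Y).card + 2 * (X ∩ Y).card = X.card + Y.card := by
  rw [symmDiff_eq_sup_sdiff_inf]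
  have h1 : (X ⊓ Y) ≤ (X ⊔ Y) := le_trans inf_le_left le_sup_left
  rw [sup_eq_union, inf_eq_inter] at *
  rw [card_sdiff_of_subset h1]
  have h2 := Finset.card_union_add_card_inter X Y
  have h3 := Finset.card_le_card h1
  omega

lemma obs_symmDiff (c : V → V) (r s : Finset V) :
    obs c (symmDiff r s) = symmDiff (obs c r) (obs c s) := by
  ext b
  have hfil : ((symmDiff r s).filter fun x => c x = b)
      = symmDiff (r.filter fun x => c x = b) (s.filter fun x => c x = b) := by
    ext x
    simp only [mem_filter, Finset.mem_symmDiff]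
    tauto
  have hcard := card_symmDiff_aux (r.filter fun x => c x = b) (s.filter fun x => c x = b)
  rw [Finset.mem_symmDiff, mem_obs, mem_obs, mem_obs, hfil]
  simp only [Nat.even_iff] at *
  omega

lemma obs_singleton (c : V → V) (v : V) : obs c ({v} : Finset V) = {c v} := by
  ext b
  rw [mem_obs, Finset.filter_singleton, Finset.mem_singleton]
  by_cases h : c v = b
  · simp [h, Nat.even_iff]
  · simp [h, Nat.even_iff]
    exact fun hb => h hb.symm

lemma singleton_symmDiff {u v : V} (huv : u ≠ v) :
    symmDiff ({u} : Finset V) {v} = {u, v} := by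
  ext x
  simp only [Finset.mem_symmDiff, Finset.mem_singleton, Finset.mem_insert]
  constructor
  · rintro (⟨rfl, _⟩ | ⟨rfl, _⟩) <;> simp
  · rintro (rfl | rfl)
    · exact Or.inl ⟨rfl, huv⟩
    · exact Or.inr ⟨rfl, fun h => huv h.symm⟩

lemma obs_pair {u v : V} (huv : u ≠ v) (c : V → V) :
    obs c ({u, v} : Finset V) = symmDiff ({c u} : Finset V) {c v} := by
  rw [← singleton_symmDiff huv, obs_symmDiff, obs_singleton, obs_singleton]

lemma obs_card_ne_one_of_card_two {c : V → V} {r : Finset V} (hr : r.card = 2) :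
    (obs c r).card ≠ 1 := by
  obtain ⟨u, v, huv, rfl⟩ := Finset.card_eq_two.mp hr
  rw [obs_pair huv]
  by_cases h : c u = c v
  · rw [h, symmDiff_self]
    simp
  · rw [singleton_symmDiff h, Finset.card_pair h]
    omega

lemma obs_mem_exists {c : V → V} {r : Finset V} {x : V} (h : x ∈ obs c r) :
    ∃ y, c y = x := by
  rw [mem_obs] at h
  rcases Finset.eq_empty_or_nonempty (r.filter fun y => c y = x) with he | ⟨y, hy⟩
  · rw [he] at h; simp at h
  · exact ⟨y, (Finset.mem_filter.mp hy).2⟩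

lemma card_symmDiff_le (X Y : Finset V) : (symmDiff X Y).card ≤ X.card + Y.card := by
  have := card_symmDiff_aux X Y
  omega

lemma obs_recolor {a b : V} (hab : a ≠ b) (c : V → V) (s : Finset V) :
    obs (fun x => if c x = a then b else c x) s
      = if a ∈ obs c s then symmDiff ((obs c s).erase a) {b} else obs c s := by
  ext x
  by_cases hxa : x = a
  · subst hxa
    have h0 : (s.filter fun y => (if c y = x then b else c y) = x) = ∅ := by
      apply Finset.filter_false_of_mem
      intro y _
      by_cases h : c y = x
      · simp only [if_pos h]
        exact fun hb => hab hb.symm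
      · simp [h]
    rw [mem_obs, h0]
    by_cases hms : x ∈ obs c s <;>
      simp [hms, Finset.mem_symmDiff, Finset.mem_erase, hab]
  · by_cases hxb : x = b
    · subst hxb
      have hsplit : (s.filter fun y => (if c y = a then x else c y) = x)
          = (s.filter fun y => c y = a) ∪ (s.filter fun y => c y = x) := by
        rw [← Finset.filter_or]
        apply Finset.filter_congr
        intro y _
        by_cases h : c y = a <;> simp [h]
      have hdis : Disjoint (s.filter fun y => c y = a) (s.filter fun y => c y = x) := by
        rw [Finset.disjoint_left]
        intro y hy1 hy2
        exact hab ((Finset.mem_filter.mp hy1).2.symm.trans (Finset.mem_filter.mp hy2).2)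
      rw [mem_obs, hsplit, Finset.card_union_of_disjoint hdis]
      by_cases hms : a ∈ obs c s
      · rw [if_pos hms]
        have h1 : x ∈ symmDiff ((obs c s).erase a) ({x} : Finset V)
            ↔ ¬ x ∈ (obs c s).erase a := by
          simp [Finset.mem_symmDiff]
        rw [h1, Finset.mem_erase]
        have hb : (x ∈ obs c s) ↔ ¬ Even ((s.filter fun y => c y = x).card) := mem_obs
        rw [mem_obs] at hms
        simp only [ne_eq, Ne.symm hab, not_false_iff, true_and, hb]
        simp only [Nat.even_iff] at *
        omega
      · rw [if_neg hms, mem_obs]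
        rw [mem_obs, not_not] at hms
        simp only [Nat.even_iff] at *
        omega
    · have hfe : (s.filter fun y => (if c y = a then b else c y) = x)
          = s.filter fun y => c y = x := by
        apply Finset.filter_congr
        intro y _
        by_cases h : c y = a
        · simp only [if_pos h, h]
          constructor
          · intro hbx; exact absurd hbx.symm hxb
          · intro hax; exact absurd hax.symm hxa
        · rw [if_neg h]
      rw [mem_obs, hfe, ← mem_obs]
      by_cases hms : a ∈ obs c s
      · rw [if_pos hms]
        simp [Finset.mem_symmDiff, Finset.mem_erase, hxa, hxb]
      · rw [if_neg hms]

lemma obs_recolor_card_eq {a b : V} (hab : a ≠ b) {c : V → V} {s : Finset V}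
    (hle : (obs c s).card ≤ 1) :
    (obs (fun x => if c x = a then b else c x) s).card = (obs c s).card := by
  rw [obs_recolor hab]
  by_cases hms : a ∈ obs c s
  · rw [if_pos hms]
    have h1 : (obs c s).card = 1 :=
      le_antisymm hle (Finset.one_le_card.mpr ⟨a, hms⟩)
    obtain ⟨y, hy⟩ := Finset.card_eq_one.mp h1
    have hya : y = a := by
      rw [hy] at hms; exact (Finset.mem_singleton.mp hms).symm
    subst hya
    rw [hy, Finset.erase_singleton]
    have : symmDiff (∅ : Finset V) {b} = {b} := by
      simp [Finset.mem_symmDiff]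
    rw [this]
    simp
  · rw [if_neg hms]

lemma applyGate_target {g : V × V} (t : V → Finset V) :
    applyGate g t g.2 = symmDiff (t g.1) (t g.2) := by
  simp [applyGate]

lemma applyGate_other {g : V × V} (t : V → Finset V) {w : V} (hw : w ≠ g.2) :
    applyGate g t w = t w := by
  simp [applyGate, hw]

lemma run_succ (C : List (V × V)) {k : ℕ} (hk : k < C.length) :
    runCircuit (C.take (k + 1)) = applyGate (C.get ⟨k, hk⟩) (runCircuit (C.take k)) := by
  have h1 : C.take (k + 1) = C.take k ++ [C.get ⟨k, hk⟩] := by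
    rw [List.take_succ]
    congr 1
    rw [List.getElem?_eq_getElem hk]
    rfl
  rw [h1]
  unfold runCircuit
  rw [List.foldl_append]
  rfl

/-- Number of non-binary outcomes among the first `k` gates. -/
def Ncount (C : List (V × V)) (k : ℕ) : ℕ :=
  (Finset.univ.filter fun i : Fin C.length =>
    i.val < k ∧ (runCircuit (C.take (i.val + 1)) (C.get i).2).card ≠ 2).card

lemma Ncount_mono (C : List (V × V)) {k k' : ℕ} (h : k ≤ k') :
    Ncount C k ≤ Ncount C k' := by
  apply Finset.card_le_card
  apply Finset.monotone_filter_right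
  intro i _ hh
  exact ⟨lt_of_lt_of_le hh.1 h, hh.2⟩

lemma Ncount_succ (C : List (V × V)) {k : ℕ} (hk : k < C.length) :
    Ncount C (k + 1) = Ncount C k +
      (if (runCircuit (C.take (k + 1)) (C.get ⟨k, hk⟩).2).card ≠ 2 then 1 else 0) := by
  classical
  by_cases hP : (runCircuit (C.take (k + 1)) (C.get ⟨k, hk⟩).2).card ≠ 2
  · rw [if_pos hP]
    have hset : (Finset.univ.filter fun i : Fin C.length =>
        i.val < k + 1 ∧ (runCircuit (C.take (i.val + 1)) (C.get i).2).card ≠ 2)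
        = insert ⟨k, hk⟩ (Finset.univ.filter fun i : Fin C.length =>
        i.val < k ∧ (runCircuit (C.take (i.val + 1)) (C.get i).2).card ≠ 2) := by
      ext i
      simp only [Finset.mem_filter, Finset.mem_insert, Finset.mem_univ, true_and]
      constructor
      · rintro ⟨h1, h2⟩
        by_cases hik : i.val = k
        · exact Or.inl (Fin.ext hik)
        · exact Or.inr ⟨by omega, h2⟩
      · rintro (rfl | ⟨h1, h2⟩)
        · exact ⟨Nat.lt_succ_self k, hP⟩
        · exact ⟨by omega, h2⟩
    rw [Ncount, hset, Finset.card_insert_of_notMem]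
    · rfl
    · simp only [Finset.mem_filter]
      rintro ⟨-, h1, -⟩
      simp at h1
  · rw [if_neg hP]
    have hset : (Finset.univ.filter fun i : Fin C.length =>
        i.val < k + 1 ∧ (runCircuit (C.take (i.val + 1)) (C.get i).2).card ≠ 2)
        = (Finset.univ.filter fun i : Fin C.length =>
        i.val < k ∧ (runCircuit (C.take (i.val + 1)) (C.get i).2).card ≠ 2) := by
      ext i
      simp only [Finset.mem_filter, Finset.mem_univ, true_and]
      constructor
      · rintro ⟨h1, h2⟩
        by_cases hik : i.val = k
        · exfalso
          apply hP
          have hik2 : i = ⟨k, hk⟩ := Fin.ext hik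
          rw [hik2] at h2
          exact h2
        · exact ⟨by omega, h2⟩
      · rintro ⟨h1, h2⟩
        exact ⟨by omega, h2⟩
    rw [Ncount, hset]
    rfl

lemma invariant (C : List (V × V)) (k : ℕ) :
    ∃ c : V → V,
      (∀ w, (obs c (runCircuit (C.take k) w)).card ≤ 1) ∧
      (∀ u v w : V, ∀ j : ℕ, j ≤ k → runCircuit (C.take j) w = {u, v} → c u = c v) ∧
      (∑ w : V, (obs c (runCircuit (C.take k) w)).card
        ≤ Ncount C k + (Finset.univ.image c).card) := by
  induction k with
  | zero =>
    have hrun0 : ∀ w : V, runCircuit (C.take 0) w = {w} := by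
      intro w; simp [runCircuit]
    refine ⟨id, ?_, ?_, ?_⟩
    · intro w
      rw [hrun0, obs_singleton]
      simp
    · intro u v w j hj hr
      have hj0 : j = 0 := Nat.le_zero.mp hj
      subst hj0
      rw [hrun0] at hr
      have hu : u = w := by
        have : u ∈ ({w} : Finset V) := by rw [hr]; simp
        simpa using this
      have hv : v = w := by
        have : v ∈ ({w} : Finset V) := by rw [hr]; simp [Finset.mem_insert]
        simpa using this
      rw [hu, hv]
    · have h0 : Ncount C 0 = 0 := by
        rw [Ncount]
        convert Finset.card_empty
        rw [Finset.filter_eq_empty_iff]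
        intro i _
        simp
      rw [h0]
      have : ∀ w : V, (obs id (runCircuit (C.take 0) w)).card = 1 := by
        intro w; rw [hrun0, obs_singleton]; simp
      rw [Finset.sum_congr rfl fun w _ => this w]
      simp [Finset.card_univ]
  | succ k ih =>
    obtain ⟨c, h1, h2, h3⟩ := ih
    by_cases hk : k < C.length
    · set g := C.get ⟨k, hk⟩ with hg
      have hrun : runCircuit (C.take (k + 1)) = applyGate g (runCircuit (C.take k)) :=
        run_succ C hk
      set t := runCircuit (C.take k) with ht
      have hAle := h1 g.1
      have hBle := h1 g.2
      have hABeq : obs c (symmDiff (t g.1) (t g.2))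
          = symmDiff (obs c (t g.1)) (obs c (t g.2)) := obs_symmDiff c _ _
      set A := obs c (t g.1) with hA
      set B := obs c (t g.2) with hB
      have hout : runCircuit (C.take (k + 1)) g.2 = symmDiff (t g.1) (t g.2) := by
        rw [hrun]; exact applyGate_target t
      by_cases hsmall : (symmDiff A B).card ≤ 1
      · refine ⟨c, ?_, ?_, ?_⟩
        · intro w
          rw [hrun]
          by_cases hw : w = g.2
          · subst hw
            rw [applyGate_target, hABeq]
            exact hsmall
          · rw [applyGate_other t hw]
            exact h1 w
        · intro u v w j hj hr
          by_cases hj' : j ≤ k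
          · exact h2 u v w j hj' hr
          · have hjk : j = k + 1 := by omega
            subst hjk
            rw [hrun] at hr
            by_cases hw : w = g.2
            · subst hw
              rw [applyGate_target] at hr
              by_cases huv : u = v
              · rw [huv]
              · have hcardle : (obs c ({u, v} : Finset V)).card ≤ 1 := by
                  rw [← hr, hABeq]
                  exact hsmall
                rw [obs_pair huv] at hcardle
                by_contra hne
                rw [singleton_symmDiff hne, Finset.card_pair hne] at hcardle
                omega
            · rw [applyGate_other t hw] at hr
              exact h2 u v w k le_rfl hr
        · have hsplit1 : ∑ w : V, (obs c (runCircuit (C.take (k + 1)) w)).card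
              = (∑ w ∈ Finset.univ.erase g.2, (obs c (t w)).card) + (symmDiff A B).card := by
            rw [← Finset.sum_erase_add _ _ (Finset.mem_univ g.2)]
            congr 1
            · apply Finset.sum_congr rfl
              intro w hw
              rw [hrun, applyGate_other t (Finset.ne_of_mem_erase hw)]
            · rw [hout, hABeq]
          have hsplit2 : ∑ w : V, (obs c (t w)).card
              = (∑ w ∈ Finset.univ.erase g.2, (obs c (t w)).card) + B.card := by
            rw [← Finset.sum_erase_add _ _ (Finset.mem_univ g.2)]
          have hnb : (symmDiff A B).card = 1 → Ncount C (k + 1) = Ncount C k + 1 := by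
            intro hone
            rw [Ncount_succ C hk, if_pos]
            intro h2c
            rw [← hg] at h2c
            have hne1 := obs_card_ne_one_of_card_two (c := c) (by rw [hout] at h2c; exact h2c)
            rw [hABeq] at hne1
            exact hne1 hone
          have hmono : Ncount C k ≤ Ncount C (k + 1) := Ncount_mono C (Nat.le_succ k)
          have hnn : Ncount C k.succ = Ncount C (k + 1) := rfl
          rw [hsplit2] at h3
          rw [hsplit1]
          by_cases hcase : (symmDiff A B).card ≤ B.card
          · omega
          · have h1' : (symmDiff A B).card = 1 := by omega
            have h2' := hnb h1'
            omega
      · -- merge case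
        have hsdle := card_symmDiff_le A B
        have hABcard : (symmDiff A B).card = 2 := by omega
        have hA1 : A.card = 1 := by omega
        have hB1 : B.card = 1 := by omega
        obtain ⟨a, ha⟩ := Finset.card_eq_one.mp hA1
        obtain ⟨b, hb⟩ := Finset.card_eq_one.mp hB1
        have hab : a ≠ b := by
          intro hE
          rw [ha, hb, ← hE, symmDiff_self] at hABcard
          simp at hABcard
        set c' := fun x => if c x = a then b else c x with hc'
        have hobsr : obs c (symmDiff (t g.1) (t g.2)) = ({a, b} : Finset V) := by
          rw [hABeq, ha, hb, singleton_symmDiff hab]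
        have hnew : obs c' (symmDiff (t g.1) (t g.2)) = ∅ := by
          rw [hc', obs_recolor hab, hobsr, if_pos (by simp)]
          rw [show ({a, b} : Finset V).erase a = {b} from
            Finset.erase_insert (by simp [hab])]
          rw [symmDiff_self]
          rfl
        have hkey : ∀ x : V, c x ∈ ({a, b} : Finset V) → c' x = b := by
          intro x hx
          show (if c x = a then b else c x) = b
          rcases Finset.mem_insert.mp hx with hxx | hxx
          · simp [hxx]
          · rw [Finset.mem_singleton] at hxx
            rw [if_neg (by rw [hxx]; exact Ne.symm hab), hxx]
        refine ⟨c', ?_, ?_, ?_⟩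
        · intro w
          rw [hrun]
          by_cases hw : w = g.2
          · subst hw
            rw [applyGate_target, hnew]
            simp
          · rw [applyGate_other t hw, hc', obs_recolor_card_eq hab (h1 w)]
            exact h1 w
        · intro u v w j hj hr
          by_cases hj' : j ≤ k
          · have hcc := h2 u v w j hj' hr
            simp only [hc', hcc]
          · have hjk : j = k + 1 := by omega
            subst hjk
            rw [hrun] at hr
            by_cases hw : w = g.2
            · subst hw
              rw [applyGate_target] at hr
              by_cases huv : u = v
              · rw [huv]
              · have hcc : obs c ({u, v} : Finset V) = ({a, b} : Finset V) := by
                  rw [← hr]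
                  exact hobsr
                rw [obs_pair huv] at hcc
                have hcuv : c u ≠ c v := by
                  intro hE
                  rw [hE, symmDiff_self] at hcc
                  have : (2 : ℕ) = 0 := by
                    rw [← Finset.card_pair hab, ← hcc]
                    rfl
                  omega
                have hcu : c u ∈ ({a, b} : Finset V) := by
                  rw [← hcc, singleton_symmDiff hcuv]
                  simp
                have hcv : c v ∈ ({a, b} : Finset V) := by
                  rw [← hcc, singleton_symmDiff hcuv]
                  simp
                rw [hkey u hcu, hkey v hcv]
            · rw [applyGate_other t hw] at hr
              have hcc := h2 u v w k le_rfl hr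
              simp only [hc', hcc]
        · -- counting in merge case
          have haim : a ∈ Finset.univ.image c := by
            obtain ⟨y, hy⟩ := obs_mem_exists (ha ▸ Finset.mem_singleton_self a)
            exact Finset.mem_image.mpr ⟨y, Finset.mem_univ y, hy⟩
          have hbim : b ∈ Finset.univ.image c := by
            obtain ⟨y, hy⟩ := obs_mem_exists (hb ▸ Finset.mem_singleton_self b)
            exact Finset.mem_image.mpr ⟨y, Finset.mem_univ y, hy⟩
          have himage : (Finset.univ.image c').card + 1 = (Finset.univ.image c).card := by
            have h5 : Finset.univ.image c' = (Finset.univ.image c).erase a := by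
              rw [hc']
              ext x
              simp only [Finset.mem_image, Finset.mem_erase, Finset.mem_univ, true_and]
              constructor
              · rintro ⟨y, hy⟩
                by_cases hya : c y = a
                · rw [if_pos hya] at hy
                  subst hy
                  refine ⟨Ne.symm hab, ?_⟩
                  obtain ⟨z, -, hz⟩ := Finset.mem_image.mp hbim
                  exact ⟨z, hz⟩
                · rw [if_neg hya] at hy
                  exact ⟨fun hE => hya (hy.trans hE), y, hy⟩
              · rintro ⟨hxa, y, hy⟩
                refine ⟨y, ?_⟩
                rw [if_neg (fun hE => hxa (by rw [← hy, hE]))]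
                exact hy
            rw [h5, Finset.card_erase_of_mem haim]
            have hpos : 1 ≤ (Finset.univ.image c).card := Finset.card_pos.mpr ⟨a, haim⟩
            omega
          have hsplit1 : ∑ w : V, (obs c' (runCircuit (C.take (k + 1)) w)).card
              = ∑ w ∈ Finset.univ.erase g.2, (obs c (t w)).card := by
            rw [← Finset.sum_erase_add _ _ (Finset.mem_univ g.2), hout, hnew]
            simp only [Finset.card_empty, add_zero]
            apply Finset.sum_congr rfl
            intro w hw
            rw [hrun, applyGate_other t (Finset.ne_of_mem_erase hw), hc',
              obs_recolor_card_eq hab (h1 w)]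
          have hsplit2 : ∑ w : V, (obs c (t w)).card
              = (∑ w ∈ Finset.univ.erase g.2, (obs c (t w)).card) + B.card := by
            rw [← Finset.sum_erase_add _ _ (Finset.mem_univ g.2)]
          have hmono : Ncount C k ≤ Ncount C (k + 1) := Ncount_mono C (Nat.le_succ k)
          have hnn : Ncount C k.succ = Ncount C (k + 1) := rfl
          rw [hsplit2] at h3
          rw [hsplit1]
          omega
    · -- k ≥ length: nothing changes
      have hstable : C.take (k + 1) = C.take k := by
        rw [List.take_of_length_le (by omega), List.take_of_length_le (by omega)]
      refine ⟨c, ?_, ?_, ?_⟩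
      · intro w; rw [hstable]; exact h1 w
      · intro u v w j hj hr
        by_cases hj' : j ≤ k
        · exact h2 u v w j hj' hr
        · have hjk : j = k + 1 := by omega
          subst hjk
          rw [hstable] at hr
          exact h2 u v w k le_rfl hr
      · rw [hstable]
        have hmono : Ncount C k ≤ Ncount C (k + 1) := Ncount_mono C (Nat.le_succ k)
        have hnn : Ncount C k.succ = Ncount C (k + 1) := rfl
        omega

end Stmt6Proof

/-- In every graphic parity network for a connected graph on `n` vertices, at least
`n − 1` gates have a non-binary outcome (the term on the target wire right after the
gate does not have exactly two elements). -/
theorem stmt6 {V : Type*} [Fintype V] [DecidableEq V] (G : SimpleGraph V)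
    (hconn : G.Connected) (C : List (V × V)) (h : IsGPN G C) :
    Fintype.card V - 1 ≤
      (Finset.univ.filter fun k : Fin C.length =>
        (runCircuit (C.take (k.val + 1)) (C.get k).2).card ≠ 2).card := by
  classical
  obtain ⟨c, h1, h2, h3⟩ := Stmt6Proof.invariant C C.length
  have hfin : ∀ w : V, runCircuit (C.take C.length) w = {w} := by
    intro w
    rw [List.take_length]
    exact h.2.2 w
  have hΦ : ∑ w : V, (Stmt6Proof.obs c (runCircuit (C.take C.length) w)).card = Fintype.card V := by
    have hone : ∀ w : V, (Stmt6Proof.obs c (runCircuit (C.take C.length) w)).card = 1 := by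
      intro w
      rw [hfin w, Stmt6Proof.obs_singleton]
      simp
    rw [Finset.sum_congr rfl fun w _ => hone w]
    simp [Finset.card_univ]
  have hadj : ∀ u v : V, G.Adj u v → c u = c v := by
    intro u v huv
    obtain ⟨k, w, hw⟩ := h.2.1 u v huv
    by_cases hkL : k ≤ C.length
    · exact h2 u v w k hkL hw
    · rw [List.take_of_length_le (by omega), h.2.2 w] at hw
      have hu : u = w := by
        have : u ∈ ({w} : Finset V) := by rw [hw]; simp
        simpa using this
      have hv : v = w := by
        have : v ∈ ({w} : Finset V) := by rw [hw]; simp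
        simpa using this
      rw [hu, hv]
  have hconst : ∀ u v : V, c u = c v := by
    intro u v
    obtain ⟨p⟩ := hconn.preconnected u v
    induction p with
    | nil => rfl
    | cons hstep p ih => exact (hadj _ _ hstep).trans ih
  obtain ⟨v0⟩ := hconn.nonempty
  have himg : (Finset.univ.image c).card = 1 := by
    have himgeq : Finset.univ.image c = {c v0} := by
      ext x
      simp only [Finset.mem_image, Finset.mem_univ, true_and, Finset.mem_singleton]
      constructor
      · rintro ⟨y, rfl⟩
        exact hconst y v0
      · rintro rfl
        exact ⟨v0, rfl⟩
    rw [himgeq]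
    simp
  have hNc : Stmt6Proof.Ncount C C.length = (Finset.univ.filter fun k : Fin C.length =>
      (runCircuit (C.take (k.val + 1)) (C.get k).2).card ≠ 2).card := by
    unfold Stmt6Proof.Ncount
    congr 1
    apply Finset.filter_congr
    intro i _
    simp [i.isLt]
  rw [hΦ, himg] at h3
  rw [← hNc]
  omega
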